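/- arXiv:2310.15607 — 6 statements merged into one kernel-verified Lean document; each statement's English description precedes it below -/
import Mathlib

section
/- Let T : E ⇉ E be maximal monotone on a finite-dimensional inner product space E, α > 0, and B : E → E symmetric positive semidefinite. Then the operator Φ(Z, Y) = (αT(Z) + BY, −BZ) on E × E is maximal monotone, i.e., I + Φ is surjective. -/
open RealInnerProductSpace

/-- A set-valued operator on a real inner product space is monotone. -/
def MonoOp {H : Type*} [NormedAddCommGroup H] [InnerProductSpace ℝ H]
    (T : H → Set H) : Prop :=
  ∀ x y u v, u ∈ T x → v ∈ T y → 0 ≤ ⟪x - y, u - v⟫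

/-- A set-valued operator is maximal monotone. -/
def MaxMonoOp {H : Type*} [NormedAddCommGroup H] [InnerProductSpace ℝ H]
    (T : H → Set H) : Prop :=
  MonoOp T ∧ ∀ T' : H → Set H, MonoOp T' → (∀ x, T x ⊆ T' x) → ∀ x, T' x = T x

set_option maxHeartbeats 1000000 in
lemma minty_zero {H : Type*} [NormedAddCommGroup H] [InnerProductSpace ℝ H]
    [FiniteDimensional ℝ H] (S : H → Set H)
    (hmono : ∀ x y u v, u ∈ S x → v ∈ S y → 0 ≤ ⟪x - y, u - v⟫)
    (hmax : ∀ a b, (∀ y v, v ∈ S y → 0 ≤ ⟪a - y, b - v⟫) → b ∈ S a)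
    (y₀ v₀ : H) (h₀ : v₀ ∈ S y₀) :
    ∃ x u, u ∈ S x ∧ x + u = 0 := by
  classical
  set K : Set (H × H × ℝ) :=
    {p | ∀ y v, v ∈ S y →
      ⟪p.2.1, y⟫ + ⟪p.1, v⟫ - ⟪y, v⟫ + (‖p.1‖ ^ 2 / 2 + ‖p.2.1‖ ^ 2 / 2) ≤ p.2.2} with hKdef
  set M : ℝ := ⟪y₀, v₀⟫ + (‖y₀‖ ^ 2 / 2 + ‖v₀‖ ^ 2 / 2) with hMdef
  set D : ℝ := ‖y₀ + v₀‖ ^ 2 / 2 with hDdef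
  -- lower bound for members of K
  have hLB : ∀ p ∈ K, ‖p.1 + v₀‖ ^ 2 / 2 + ‖p.2.1 + y₀‖ ^ 2 / 2 - D ≤ p.2.2 := by
    intro p hp
    have h1 := hp y₀ v₀ h₀
    have e1 : ‖p.1 + v₀‖ ^ 2 = ‖p.1‖ ^ 2 + 2 * ⟪p.1, v₀⟫ + ‖v₀‖ ^ 2 := by
      rw [@norm_add_sq_real]
    have e2 : ‖p.2.1 + y₀‖ ^ 2 = ‖p.2.1‖ ^ 2 + 2 * ⟪p.2.1, y₀⟫ + ‖y₀‖ ^ 2 := by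
      rw [@norm_add_sq_real]
    have e3 : ‖y₀ + v₀‖ ^ 2 = ‖y₀‖ ^ 2 + 2 * ⟪y₀, v₀⟫ + ‖v₀‖ ^ 2 := by
      rw [@norm_add_sq_real]
    rw [hDdef]
    linarith
  set K' : Set (H × H × ℝ) := K ∩ {p | p.2.2 ≤ M} with hK'def
  have hmemK : ((y₀, v₀, M) : H × H × ℝ) ∈ K' := by
    constructor
    · intro y v hv
      have h1 := hmono y₀ y v₀ v h₀ hv
      have e1 : ⟪y₀ - y, v₀ - v⟫ = ⟪y₀, v₀⟫ - ⟪y₀, v⟫ - ⟪y, v₀⟫ + ⟪y, v⟫ := by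
        simp [inner_sub_left, inner_sub_right]; ring
      have e2 : ⟪v₀, y⟫ = ⟪y, v₀⟫ := real_inner_comm _ _
      show ⟪v₀, y⟫ + ⟪y₀, v⟫ - ⟪y, v⟫ + (‖y₀‖ ^ 2 / 2 + ‖v₀‖ ^ 2 / 2) ≤ M
      rw [hMdef]
      linarith [e1 ▸ h1]
    · show M ≤ M
      exact le_refl M
  -- compactness of K'
  set R : ℝ := Real.sqrt (2 * (M + D)) + ‖y₀‖ + ‖v₀‖ with hRdef
  have hsub : K' ⊆ (Metric.closedBall (0 : H) R) ×ˢ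
      ((Metric.closedBall (0 : H) R) ×ˢ Set.Icc (-D) M) := by
    rintro p ⟨hpK, hpM⟩
    have hpM' : p.2.2 ≤ M := hpM
    have hlb := hLB p hpK
    have hbx : ‖p.1 + v₀‖ ^ 2 ≤ 2 * (M + D) := by nlinarith [sq_nonneg ‖p.2.1 + y₀‖]
    have hbu : ‖p.2.1 + y₀‖ ^ 2 ≤ 2 * (M + D) := by nlinarith [sq_nonneg ‖p.1 + v₀‖]
    have hbx' : ‖p.1 + v₀‖ ≤ Real.sqrt (2 * (M + D)) := by
      have := Real.sqrt_le_sqrt hbx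
      rwa [Real.sqrt_sq (norm_nonneg _)] at this
    have hbu' : ‖p.2.1 + y₀‖ ≤ Real.sqrt (2 * (M + D)) := by
      have := Real.sqrt_le_sqrt hbu
      rwa [Real.sqrt_sq (norm_nonneg _)] at this
    have hx : ‖p.1‖ ≤ R := by
      have : ‖p.1‖ ≤ ‖p.1 + v₀‖ + ‖v₀‖ := by
        simpa using norm_sub_le (p.1 + v₀) v₀
      rw [hRdef]; linarith [norm_nonneg y₀]
    have hu : ‖p.2.1‖ ≤ R := by
      have : ‖p.2.1‖ ≤ ‖p.2.1 + y₀‖ + ‖y₀‖ := by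
        simpa using norm_sub_le (p.2.1 + y₀) y₀
      rw [hRdef]; linarith [norm_nonneg v₀]
    have ht : p.2.2 ∈ Set.Icc (-D) M := by
      constructor
      · nlinarith [sq_nonneg ‖p.1 + v₀‖, sq_nonneg ‖p.2.1 + y₀‖]
      · exact hpM'
    exact ⟨mem_closedBall_zero_iff.2 hx, mem_closedBall_zero_iff.2 hu, ht⟩
  have hKcl : IsClosed K := by
    have hKeq : K = ⋂ (y : H), ⋂ (v : H), ⋂ (_ : v ∈ S y),
        {p : H × H × ℝ | ⟪p.2.1, y⟫ + ⟪p.1, v⟫ - ⟪y, v⟫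
          + (‖p.1‖ ^ 2 / 2 + ‖p.2.1‖ ^ 2 / 2) ≤ p.2.2} := by
      ext p
      simp only [hKdef, Set.mem_setOf_eq, Set.mem_iInter]
    rw [hKeq]
    refine isClosed_iInter fun y => isClosed_iInter fun v => isClosed_iInter fun _ => ?_
    have h1 : Continuous (fun p : H × H × ℝ => p.1) := continuous_fst
    have h2 : Continuous (fun p : H × H × ℝ => p.2.1) := continuous_fst.comp continuous_snd
    have h3 : Continuous (fun p : H × H × ℝ => p.2.2) := continuous_snd.comp continuous_snd
    exact isClosed_le ((((h2.inner continuous_const).add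
      (h1.inner continuous_const)).sub continuous_const).add
      ((((h1.norm).pow 2).div_const 2).add (((h2.norm).pow 2).div_const 2))) h3
  have hK'cl : IsClosed K' := hKcl.inter (isClosed_le (continuous_snd.comp continuous_snd)
    continuous_const)
  have hK'cp : IsCompact K' := IsCompact.of_isClosed_subset
    ((isCompact_closedBall _ _).prod ((isCompact_closedBall _ _).prod isCompact_Icc))
    hK'cl hsub
  obtain ⟨pb, hpbK', hpbmin⟩ := hK'cp.exists_isMinOn ⟨_, hmemK⟩
    ((continuous_snd.comp continuous_snd).continuousOn)
  set xb := pb.1 with hxb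
  set ub := pb.2.1 with hub
  set tb := pb.2.2 with htb
  have htbM : tb ≤ M := by
    have := hpbmin hmemK
    simpa using this
  have hglob : ∀ p ∈ K, tb ≤ p.2.2 := by
    intro p hp
    by_cases h : p.2.2 ≤ M
    · exact hpbmin ⟨hp, h⟩
    · push_neg at h
      linarith
  have hM1 : ∀ y v, v ∈ S y →
      ⟪ub, y⟫ + ⟪xb, v⟫ - ⟪y, v⟫ + (‖xb‖ ^ 2 / 2 + ‖ub‖ ^ 2 / 2) ≤ tb :=
    hpbK'.1
  set s : ℝ := tb - (‖xb‖ ^ 2 / 2 + ‖ub‖ ^ 2 / 2) with hsdef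
  -- subgradient inequality
  have hSG : ∀ y' v', v' ∈ S y' → s - ⟪xb, y' - xb⟫ - ⟪ub, v' - ub⟫ ≤ ⟪y', v'⟫ := by
    intro y' v' hv'
    set Ec : ℝ := ‖y' - xb‖ ^ 2 / 2 + ‖v' - ub‖ ^ 2 / 2 with hEc
    have hEc0 : 0 ≤ Ec := by positivity
    have hstep : ∀ t : ℝ, 0 < t → t ≤ 1 →
        s - ⟪xb, y' - xb⟫ - ⟪ub, v' - ub⟫ - t * Ec ≤ ⟪y', v'⟫ := by
      intro t ht0 ht1
      set xt : H := xb + t • (y' - xb) with hxt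
      set ut : H := ub + t • (v' - ub) with hut
      set τ : ℝ := (1 - t) * s + t * ⟪y', v'⟫ + (‖xt‖ ^ 2 / 2 + ‖ut‖ ^ 2 / 2) with hτ
      have hKmem : ((xt, ut, τ) : H × H × ℝ) ∈ K := by
        intro y v hv
        show ⟪ut, y⟫ + ⟪xt, v⟫ - ⟪y, v⟫ + (‖xt‖ ^ 2 / 2 + ‖ut‖ ^ 2 / 2) ≤ τ
        have eA : ⟪ut, y⟫ = (1 - t) * ⟪ub, y⟫ + t * ⟪v', y⟫ := by
          rw [hut]
          simp [inner_add_left, real_inner_smul_left, inner_sub_left]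
          ring
        have eB : ⟪xt, v⟫ = (1 - t) * ⟪xb, v⟫ + t * ⟪y', v⟫ := by
          rw [hxt]
          simp [inner_add_left, real_inner_smul_left, inner_sub_left]
          ring
        have hm1 := hM1 y v hv
        have hm2 : ⟪v', y⟫ + ⟪y', v⟫ - ⟪y, v⟫ ≤ ⟪y', v'⟫ := by
          have h1 := hmono y' y v' v hv' hv
          have e1 : ⟪y' - y, v' - v⟫ = ⟪y', v'⟫ - ⟪y', v⟫ - ⟪y, v'⟫ + ⟪y, v⟫ := by
            simp [inner_sub_left, inner_sub_right]; ring
          have e2 : ⟪v', y⟫ = ⟪y, v'⟫ := real_inner_comm _ _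
          linarith [e1 ▸ h1]
        rw [hτ, eA, eB]
        have c1 : (1 - t) * (⟪ub, y⟫ + ⟪xb, v⟫ - ⟪y, v⟫) ≤ (1 - t) * s := by
          apply mul_le_mul_of_nonneg_left _ (by linarith)
          rw [hsdef]; linarith
        have c2 : t * (⟪v', y⟫ + ⟪y', v⟫ - ⟪y, v⟫) ≤ t * ⟪y', v'⟫ :=
          mul_le_mul_of_nonneg_left hm2 (le_of_lt ht0)
        ring_nf at c1 c2 ⊢; linarith [c1, c2]
      have hτge := hglob _ hKmem
      have hqx : ‖xt‖ ^ 2 = ‖xb‖ ^ 2 + 2 * (t * ⟪xb, y' - xb⟫) + t ^ 2 * ‖y' - xb‖ ^ 2 := by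
        rw [hxt, @norm_add_sq_real, real_inner_smul_right, norm_smul]
        rw [Real.norm_eq_abs, mul_pow, sq_abs]
      have hqu : ‖ut‖ ^ 2 = ‖ub‖ ^ 2 + 2 * (t * ⟪ub, v' - ub⟫) + t ^ 2 * ‖v' - ub‖ ^ 2 := by
        rw [hut, @norm_add_sq_real, real_inner_smul_right, norm_smul]
        rw [Real.norm_eq_abs, mul_pow, sq_abs]
      have hτ' : tb ≤ τ := hτge
      rw [hτ, hqx, hqu] at hτ'
      have hX : 0 ≤ t * (⟪y', v'⟫ - s + ⟪xb, y' - xb⟫ + ⟪ub, v' - ub⟫ + t * Ec) := by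
        rw [hEc]; rw [hsdef] at hτ' ⊢; nlinarith [hτ']
      have hX2 : (0 : ℝ) ≤ ⟪y', v'⟫ - s + ⟪xb, y' - xb⟫ + ⟪ub, v' - ub⟫ + t * Ec := by
        by_contra hneg
        push_neg at hneg
        nlinarith
      linarith
    apply le_of_forall_pos_le_add
    intro ε hε
    set t : ℝ := min 1 (ε / (Ec + 1)) with htdef
    have ht0 : 0 < t := lt_min one_pos (div_pos hε (by linarith))
    have ht1 : t ≤ 1 := min_le_left _ _
    have htE : t * Ec ≤ ε := by
      have h1 : t * Ec ≤ (ε / (Ec + 1)) * (Ec + 1) := by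
        apply mul_le_mul (min_le_right _ _) (by linarith) hEc0
        exact le_of_lt (div_pos hε (by linarith))
      rwa [div_mul_cancel₀ _ (by linarith : Ec + 1 ≠ 0)] at h1
    have := hstep t ht0 ht1
    linarith
  -- s is at least ⟪xb, ub⟫
  have hs : ⟪xb, ub⟫ ≤ s := by
    by_cases hc : ∀ y v, v ∈ S y → 0 ≤ ⟪xb - y, ub - v⟫
    · have hm := hmax _ _ hc
      have h1 := hM1 xb ub hm
      have e2 : ⟪ub, xb⟫ = ⟪xb, ub⟫ := real_inner_comm _ _
      rw [hsdef]; linarith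
    · push_neg at hc
      obtain ⟨y, v, hv, hlt⟩ := hc
      have h1 := hM1 y v hv
      have e1 : ⟪xb - y, ub - v⟫ = ⟪xb, ub⟫ - ⟪xb, v⟫ - ⟪y, ub⟫ + ⟪y, v⟫ := by
        simp [inner_sub_left, inner_sub_right]; ring
      have e2 : ⟪ub, y⟫ = ⟪y, ub⟫ := real_inner_comm _ _
      rw [hsdef]
      rw [e1] at hlt
      linarith
  -- (-ub, -xb) is monotonically related to the graph of S
  have hrel : ∀ y v, v ∈ S y → 0 ≤ ⟪-ub - y, -xb - v⟫ := by
    intro y v hv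
    have hsg := hSG y v hv
    have e1 : ⟪-ub - y, -xb - v⟫ = ⟪ub, xb⟫ + ⟪ub, v⟫ + ⟪y, xb⟫ + ⟪y, v⟫ := by
      simp [inner_sub_left, inner_sub_right, inner_neg_left, inner_neg_right]; ring
    have e2 : ⟪xb, y - xb⟫ = ⟪xb, y⟫ - ‖xb‖ ^ 2 := by
      rw [inner_sub_right, real_inner_self_eq_norm_sq]
    have e3 : ⟪ub, v - ub⟫ = ⟪ub, v⟫ - ‖ub‖ ^ 2 := by
      rw [inner_sub_right, real_inner_self_eq_norm_sq]
    have e4 : ⟪ub, xb⟫ = ⟪xb, ub⟫ := real_inner_comm _ _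
    have e5 : ⟪y, xb⟫ = ⟪xb, y⟫ := real_inner_comm _ _
    have e6 : 0 ≤ ‖xb + ub‖ ^ 2 := sq_nonneg _
    have e7 : ‖xb + ub‖ ^ 2 = ‖xb‖ ^ 2 + 2 * ⟪xb, ub⟫ + ‖ub‖ ^ 2 := by
      rw [@norm_add_sq_real]
    rw [e1]
    rw [e2, e3] at hsg
    linarith
  have hmem : -xb ∈ S (-ub) := hmax _ _ hrel
  have hfin := hSG _ _ hmem
  have f1 : ⟪xb, -ub - xb⟫ = -⟪xb, ub⟫ - ‖xb‖ ^ 2 := by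
    rw [inner_sub_right, inner_neg_right, real_inner_self_eq_norm_sq]
  have f2 : ⟪ub, -xb - ub⟫ = -⟪ub, xb⟫ - ‖ub‖ ^ 2 := by
    rw [inner_sub_right, inner_neg_right, real_inner_self_eq_norm_sq]
  have f3 : ⟪-ub, -xb⟫ = ⟪xb, ub⟫ := by
    rw [inner_neg_neg]; exact real_inner_comm _ _
  have f4 : ⟪ub, xb⟫ = ⟪xb, ub⟫ := real_inner_comm _ _
  have f5 : ‖xb + ub‖ ^ 2 = ‖xb‖ ^ 2 + 2 * ⟪xb, ub⟫ + ‖ub‖ ^ 2 := by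
    rw [@norm_add_sq_real]
  have hz : ‖xb + ub‖ ^ 2 ≤ 0 := by
    rw [f1, f2, f3, f4] at hfin
    linarith
  have hz2 : xb + ub = 0 := by
    have : ‖xb + ub‖ ^ 2 = 0 := le_antisymm hz (sq_nonneg _)
    have hn : ‖xb + ub‖ = 0 := by
      nlinarith [norm_nonneg (xb + ub)]
    exact norm_eq_zero.1 hn
  refine ⟨-ub, -xb, hmem, ?_⟩
  have : -ub + -xb = -(xb + ub) := by abel
  rw [this, hz2, neg_zero]

/-- A maximal monotone operator contains every point monotonically related to its graph. -/
lemma maxmono_related {H : Type*} [NormedAddCommGroup H] [InnerProductSpace ℝ H]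
    (T : H → Set H) (hT : MaxMonoOp T) (a b : H)
    (h : ∀ y v, v ∈ T y → 0 ≤ ⟪a - y, b - v⟫) : b ∈ T a := by
  set T' : H → Set H := fun x => T x ∪ {w | x = a ∧ w = b} with hT'
  have hmono' : MonoOp T' := by
    intro x y u v hu hv
    simp only [hT', Set.mem_union, Set.mem_setOf_eq] at hu hv
    rcases hu with hu | ⟨rfl, rfl⟩ <;> rcases hv with hv | ⟨rfl, rfl⟩
    · exact hT.1 x y u v hu hv
    · have e : ⟪x - y, u - v⟫ = ⟪y - x, v - u⟫ := by
        rw [show x - y = -(y - x) by abel, show u - v = -(v - u) by abel, inner_neg_neg]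
      rw [e]; exact h x u hu
    · exact h y v hv
    · simp
  have heq := hT.2 T' hmono' (fun x => Set.subset_union_left) a
  rw [← heq]
  exact Or.inr ⟨rfl, rfl⟩

/-- Minty's theorem: a maximal monotone operator on a finite-dimensional real inner
product space satisfies `range (I + S) = H`. -/
lemma minty {H : Type*} [NormedAddCommGroup H] [InnerProductSpace ℝ H]
    [FiniteDimensional ℝ H] (S : H → Set H)
    (hmono : ∀ x y u v, u ∈ S x → v ∈ S y → 0 ≤ ⟪x - y, u - v⟫)
    (hmax : ∀ a b, (∀ y v, v ∈ S y → 0 ≤ ⟪a - y, b - v⟫) → b ∈ S a)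
    (y₀ v₀ : H) (h₀ : v₀ ∈ S y₀) (w : H) :
    ∃ x u, u ∈ S x ∧ x + u = w := by
  set S' : H → Set H := fun x => (fun u => u - w) '' S x with hS'
  have hmono' : ∀ x y u v, u ∈ S' x → v ∈ S' y → 0 ≤ ⟪x - y, u - v⟫ := by
    rintro x y u v ⟨u₀, hu₀, rfl⟩ ⟨v₁, hv₁, rfl⟩
    rw [show u₀ - w - (v₁ - w) = u₀ - v₁ by abel]
    exact hmono x y u₀ v₁ hu₀ hv₁
  have hmax' : ∀ a b, (∀ y v, v ∈ S' y → 0 ≤ ⟪a - y, b - v⟫) → b ∈ S' a := by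
    intro a b h
    refine ⟨b + w, hmax a (b + w) ?_, by show b + w - w = b; abel⟩
    intro y v hv
    have h1 := h y (v - w) ⟨v, hv, rfl⟩
    rwa [show b - (v - w) = b + w - v by abel] at h1
  obtain ⟨x, u, hu, hsum⟩ := minty_zero S' hmono' hmax' y₀ (v₀ - w) ⟨v₀, h₀, rfl⟩
  obtain ⟨u₀, hu₀, rfl⟩ := hu
  refine ⟨x, u₀, hu₀, ?_⟩
  have e : x + u₀ = (x + (u₀ - w)) + w := by abel
  rw [e, hsum, zero_add]

/-- Let `T` be maximal monotone on a finite-dimensional inner product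
space `E`, `α > 0`, and `B` symmetric positive semidefinite. Then the operator
`Φ(Z, Y) = (αT(Z) + BY, −BZ)` on `E × E` is maximal monotone, i.e. `I + Φ` is
surjective: for every `(ζ, η)` there exist `(Z, Y)` and `V ∈ T(Z)` with
`Z + (αV + BY) = ζ` and `Y − BZ = η`. -/
theorem stmt7 {E : Type*} [NormedAddCommGroup E] [InnerProductSpace ℝ E]
    [FiniteDimensional ℝ E]
    (T : E → Set E) (hT : MaxMonoOp T)
    (α : ℝ) (hα : 0 < α)
    (B : E →ₗ[ℝ] E)
    (hBsym : ∀ x y, ⟪B x, y⟫ = ⟪x, B y⟫)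
    (hBpsd : ∀ x, 0 ≤ ⟪x, B x⟫) :
    ∀ ζ η : E, ∃ Z Y V : E, V ∈ T Z ∧ Z + (α • V + B Y) = ζ ∧ Y + (-(B Z)) = η := by
  intro ζ η
  classical
  have hTmax : ∀ a b : E, (∀ y v, v ∈ T y → 0 ≤ ⟪a - y, b - v⟫) → b ∈ T a :=
    fun a b h => maxmono_related T hT a b h
  have hne : ∃ y v, v ∈ T y := by
    by_contra hg
    push_neg at hg
    exact hg 0 0 (hTmax 0 0 (fun y v hv => absurd hv (hg y v)))
  obtain ⟨Z₀, V₀, hV₀⟩ := hne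
  set Φ : WithLp 2 (E × E) → Set (WithLp 2 (E × E)) :=
    fun p => {q | q.ofLp.2 = -(B p.ofLp.1) ∧ ∃ V ∈ T p.ofLp.1, q.ofLp.1 = α • V + B p.ofLp.2} with hΦ
  have hmonoΦ : ∀ p p' u u', u ∈ Φ p → u' ∈ Φ p' → 0 ≤ ⟪p - p', u - u'⟫ := by
    rintro p p' u u' ⟨h2, V, hV, h1⟩ ⟨h2', V', hV', h1'⟩
    rw [WithLp.prod_inner_apply]
    have e1 : ⟪(p - p').ofLp.1, (u - u').ofLp.1⟫
        = α * ⟪p.ofLp.1 - p'.ofLp.1, V - V'⟫ + ⟪p.ofLp.1 - p'.ofLp.1, B (p.ofLp.2 - p'.ofLp.2)⟫ := by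
      show ⟪p.ofLp.1 - p'.ofLp.1, u.ofLp.1 - u'.ofLp.1⟫ = _
      rw [h1, h1', show α • V + B p.ofLp.2 - (α • V' + B p'.ofLp.2)
        = α • (V - V') + B (p.ofLp.2 - p'.ofLp.2) by rw [map_sub, smul_sub]; abel]
      rw [inner_add_right, real_inner_smul_right]
    have e2 : ⟪(p - p').ofLp.2, (u - u').ofLp.2⟫ = -⟪p.ofLp.2 - p'.ofLp.2, B (p.ofLp.1 - p'.ofLp.1)⟫ := by
      show ⟪p.ofLp.2 - p'.ofLp.2, u.ofLp.2 - u'.ofLp.2⟫ = _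
      rw [h2, h2', show -(B p.ofLp.1) - -(B p'.ofLp.1) = -(B (p.ofLp.1 - p'.ofLp.1)) by rw [map_sub]; abel,
        inner_neg_right]
    have e3 : ⟪p.ofLp.1 - p'.ofLp.1, B (p.ofLp.2 - p'.ofLp.2)⟫ = ⟪p.ofLp.2 - p'.ofLp.2, B (p.ofLp.1 - p'.ofLp.1)⟫ := by
      rw [← hBsym (p.ofLp.1 - p'.ofLp.1) (p.ofLp.2 - p'.ofLp.2)]
      exact real_inner_comm _ _
    have e4 : 0 ≤ α * ⟪p.ofLp.1 - p'.ofLp.1, V - V'⟫ :=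
      mul_nonneg hα.le (hT.1 _ _ _ _ hV hV')
    rw [e1, e2]
    linarith [e3, e4]
  have hmaxΦ : ∀ a b, (∀ y v, v ∈ Φ y → 0 ≤ ⟪a - y, b - v⟫) → b ∈ Φ a := by
    intro a b hrel
    set w : E := B a.ofLp.1 + b.ofLp.2 with hw
    have hc : ∀ c : ℝ, 0 ≤ ⟪a.ofLp.1 - Z₀, b.ofLp.1 - (α • V₀ + B (c • w))⟫
        + ⟪a.ofLp.2 - c • w, b.ofLp.2 - -(B Z₀)⟫ := by
      intro c
      have h1 := hrel (WithLp.toLp 2 (Z₀, c • w))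
        (WithLp.toLp 2 (α • V₀ + B (c • w), -(B Z₀))) ⟨rfl, V₀, hV₀, rfl⟩
      rw [WithLp.prod_inner_apply] at h1
      exact h1
    set K₀ : ℝ := ⟪a.ofLp.1 - Z₀, b.ofLp.1 - α • V₀⟫ + ⟪a.ofLp.2, b.ofLp.2 + B Z₀⟫ with hK₀
    have hc' : ∀ c : ℝ, c * ‖w‖ ^ 2 ≤ K₀ := by
      intro c
      have h1 := hc c
      have e1 : ⟪a.ofLp.1 - Z₀, b.ofLp.1 - (α • V₀ + B (c • w))⟫
          = ⟪a.ofLp.1 - Z₀, b.ofLp.1 - α • V₀⟫ - c * ⟪B (a.ofLp.1 - Z₀), w⟫ := by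
        rw [show b.ofLp.1 - (α • V₀ + B (c • w)) = (b.ofLp.1 - α • V₀) - c • (B w) by
          rw [map_smul]; abel]
        rw [inner_sub_right, real_inner_smul_right, hBsym]
      have e2 : ⟪a.ofLp.2 - c • w, b.ofLp.2 - -(B Z₀)⟫
          = ⟪a.ofLp.2, b.ofLp.2 + B Z₀⟫ - c * ⟪w, b.ofLp.2 + B Z₀⟫ := by
        rw [show b.ofLp.2 - -(B Z₀) = b.ofLp.2 + B Z₀ by abel, inner_sub_left, real_inner_smul_left]
      have e3 : ⟪B (a.ofLp.1 - Z₀), w⟫ + ⟪w, b.ofLp.2 + B Z₀⟫ = ‖w‖ ^ 2 := by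
        rw [show ⟪B (a.ofLp.1 - Z₀), w⟫ = ⟪w, B a.ofLp.1 - B Z₀⟫ by
          rw [← map_sub]; exact real_inner_comm _ _]
        rw [← inner_add_right, show B a.ofLp.1 - B Z₀ + (b.ofLp.2 + B Z₀) = B a.ofLp.1 + b.ofLp.2 by abel,
          ← hw, real_inner_self_eq_norm_sq]
      rw [e1, e2] at h1
      have e4 : c * ⟪B (a.ofLp.1 - Z₀), w⟫ + c * ⟪w, b.ofLp.2 + B Z₀⟫ = c * ‖w‖ ^ 2 := by
        rw [← mul_add, e3]
      rw [hK₀]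
      linarith [h1, e4]
    have hw0 : w = 0 := by
      by_contra hw0
      have hpos : 0 < ‖w‖ ^ 2 := pow_pos (norm_pos_iff.mpr hw0) 2
      have h1 := hc' ((K₀ + 1) / ‖w‖ ^ 2)
      rw [div_mul_cancel₀ _ (ne_of_gt hpos)] at h1
      linarith
    have hQ : b.ofLp.2 = -(B a.ofLp.1) := by
      have h1 : B a.ofLp.1 + b.ofLp.2 = 0 := by rw [← hw]; exact hw0
      exact eq_neg_of_add_eq_zero_right h1
    have hrel2 : ∀ Z' V', V' ∈ T Z' → 0 ≤ ⟪a.ofLp.1 - Z', (b.ofLp.1 - B a.ofLp.2) - α • V'⟫ := by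
      intro Z' V' hV'
      have h0 := hrel (WithLp.toLp 2 (Z', a.ofLp.2))
        (WithLp.toLp 2 (α • V' + B a.ofLp.2, -(B Z'))) ⟨rfl, V', hV', rfl⟩
      rw [WithLp.prod_inner_apply] at h0
      have h1 : 0 ≤ ⟪a.ofLp.1 - Z', b.ofLp.1 - (α • V' + B a.ofLp.2)⟫
          + ⟪a.ofLp.2 - a.ofLp.2, b.ofLp.2 - -(B Z')⟫ := h0
      rw [sub_self, inner_zero_left, show b.ofLp.1 - (α • V' + B a.ofLp.2)
        = (b.ofLp.1 - B a.ofLp.2) - α • V' by abel] at h1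
      linarith
    have hVmem : α⁻¹ • (b.ofLp.1 - B a.ofLp.2) ∈ T a.ofLp.1 := by
      apply hTmax
      intro y v hv
      have h1 := hrel2 y v hv
      have e1 : α⁻¹ • (b.ofLp.1 - B a.ofLp.2) - v = α⁻¹ • ((b.ofLp.1 - B a.ofLp.2) - α • v) := by
        rw [smul_sub α⁻¹ (b.ofLp.1 - B a.ofLp.2) (α • v), smul_smul, inv_mul_cancel₀ (ne_of_gt hα),
          one_smul]
      rw [e1, real_inner_smul_right]
      exact mul_nonneg (by positivity) h1
    refine ⟨hQ, α⁻¹ • (b.ofLp.1 - B a.ofLp.2), hVmem, ?_⟩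
    rw [smul_smul, mul_inv_cancel₀ (ne_of_gt hα), one_smul]
    abel
  obtain ⟨p, u, hu, hsum⟩ := minty Φ hmonoΦ hmaxΦ (WithLp.toLp 2 (Z₀, 0))
    (WithLp.toLp 2 (α • V₀ + B (0 : E), -(B Z₀))) ⟨rfl, V₀, hV₀, rfl⟩
    (WithLp.toLp 2 (ζ, η))
  obtain ⟨h2, V, hV, h1⟩ := hu
  refine ⟨p.ofLp.1, p.ofLp.2, V, hV, ?_, ?_⟩
  · have e := congrArg (fun r : WithLp 2 (E × E) => r.ofLp.1) hsum
    show p.ofLp.1 + (α • V + B p.ofLp.2) = ζ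
    rw [← h1]
    exact e
  · have e := congrArg (fun r : WithLp 2 (E × E) => r.ofLp.2) hsum
    show p.ofLp.2 + -(B p.ofLp.1) = η
    rw [← h2]
    exact e
end

section
/- Let T₁,…,T_N : ℝⁿ ⇉ ℝⁿ be maximal monotone with product operator T, C = W̃ − W symmetric positive semidefinite with null(√C) = span{𝟏}, and α > 0. If z* ∈ ℝⁿ satisfies 0 ∈ Σᵢ Tᵢ(z*), then there exist Y* ∈ range(√C) and Z* = 𝟏 (z*)^⊤ such that 0 ∈ αT(Z*) + √C Y* and √C Z* = 0. Conversely, if a pair (Z*, Y*) satisfies 0 ∈ αT(Z*) + √C Y* and √C Z* = 0, then Z* = 𝟏 (z*)^⊤ for some z* with 0 ∈ Σᵢ Tᵢ(z*). -/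
open RealInnerProductSpace

lemma key_scalar (N : ℕ) (S : Matrix (Fin N) (Fin N) ℝ) (hsymm : S.IsHermitian)
    (hnull : ∀ v : Fin N → ℝ, S.mulVec v = 0 ↔ ∃ c : ℝ, v = fun _ => c)
    (w : Fin N → ℝ) (hw : ∑ i, w i = 0) : ∃ y : Fin N → ℝ, S.mulVec y = w := by
  rcases Nat.eq_zero_or_pos N with h0 | hN
  · subst h0
    exact ⟨0, funext fun i => i.elim0⟩
  have hone : S.mulVec (fun _ => (1:ℝ)) = 0 := (hnull _).mpr ⟨1, rfl⟩
  have hrow : ∀ i, ∑ j, S i j = 0 := by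
    intro i
    have := congrFun hone i
    simpa [Matrix.mulVec, dotProduct] using this
  have hcol : ∀ j, ∑ i, S i j = 0 := by
    intro j
    have : ∀ i, S i j = S j i := fun i => by
      have := hsymm.apply i j
      simpa using this.symm
    simp_rw [this]
    exact hrow j
  set f : (Fin N → ℝ) →ₗ[ℝ] (Fin N → ℝ) := S.mulVecLin with hf
  set g : (Fin N → ℝ) →ₗ[ℝ] ℝ := ∑ i, (LinearMap.proj i : (Fin N → ℝ) →ₗ[ℝ] ℝ) with hg
  have hgapp : ∀ v : Fin N → ℝ, g v = ∑ i, v i := by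
    intro v; simp [hg]
  have hker : LinearMap.ker f = Submodule.span ℝ {(fun _ => (1:ℝ) : Fin N → ℝ)} := by
    ext v
    simp only [LinearMap.mem_ker, hf, Matrix.mulVecLin_apply, hnull,
      Submodule.mem_span_singleton]
    constructor
    · rintro ⟨c, rfl⟩; exact ⟨c, by funext i; simp⟩
    · rintro ⟨c, rfl⟩; exact ⟨c, by funext i; simp⟩
  have hle : LinearMap.range f ≤ LinearMap.ker g := by
    rintro _ ⟨y, rfl⟩
    simp only [LinearMap.mem_ker, hgapp, hf, Matrix.mulVecLin_apply, Matrix.mulVec,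
      dotProduct]
    rw [Finset.sum_comm]
    simp only [← Finset.sum_mul, hcol]
    simp
  have hone_ne : (fun _ => (1:ℝ) : Fin N → ℝ) ≠ 0 := by
    intro h
    have := congrFun h ⟨0, hN⟩
    simpa using this
  have hkerrank : Module.finrank ℝ (LinearMap.ker f) = 1 := by
    rw [hker, finrank_span_singleton hone_ne]
  have hgsurj : Function.Surjective g := by
    intro r
    exact ⟨fun _ => r / N, by
      have hN' : (N:ℝ) ≠ 0 := Nat.cast_ne_zero.mpr hN.ne'
      rw [hgapp, Finset.sum_const, Finset.card_univ, Fintype.card_fin, nsmul_eq_mul]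
      field_simp⟩
  have hrank1 : Module.finrank ℝ (LinearMap.range f) + 1 = N := by
    have := LinearMap.finrank_range_add_finrank_ker f
    rw [hkerrank] at this
    simpa [Module.finrank_pi] using this
  have hrank2 : Module.finrank ℝ (LinearMap.ker g) + 1 = N := by
    have := LinearMap.finrank_range_add_finrank_ker g
    have hr : LinearMap.range g = ⊤ := LinearMap.range_eq_top.mpr hgsurj
    rw [hr] at this
    simp [Module.finrank_pi] at this
    omega
  have heq : LinearMap.range f = LinearMap.ker g :=
    Submodule.eq_of_le_of_finrank_le hle (by omega)
  have hw' : w ∈ LinearMap.ker g := by rw [LinearMap.mem_ker, hgapp]; exact hw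
  rw [← heq] at hw'
  obtain ⟨y, hy⟩ := hw'
  exact ⟨y, hy⟩

lemma key_scalar' (N : ℕ) (hN : 0 < N) (S : Matrix (Fin N) (Fin N) ℝ) (hsymm : S.IsHermitian)
    (hnull : ∀ v : Fin N → ℝ, S.mulVec v = 0 ↔ ∃ c : ℝ, v = fun _ => c)
    (w : Fin N → ℝ) (hw : ∑ i, w i = 0) :
    ∃ y : Fin N → ℝ, (∑ i, y i = 0) ∧ S.mulVec y = w := by
  obtain ⟨y, hy⟩ := key_scalar N S hsymm hnull w hw
  refine ⟨y - (fun _ => (∑ i, y i) / N), ?_, ?_⟩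
  · have : (N:ℝ) ≠ 0 := Nat.cast_ne_zero.mpr hN.ne'
    simp [Finset.sum_sub_distrib]
    field_simp
    ring
  · have hone : S.mulVec (fun _ => ((∑ i, y i) / N : ℝ)) = 0 :=
      (hnull _).mpr ⟨_, rfl⟩
    rw [Matrix.mulVec_sub, hy, hone, sub_zero]

lemma euc_sum_apply {ι : Type*} (s : Finset ι) {m : ℕ}
    (f : ι → EuclideanSpace ℝ (Fin m)) (k : Fin m) :
    (∑ i ∈ s, f i) k = ∑ i ∈ s, f i k := by
  exact map_sum (EuclideanSpace.proj (𝕜 := ℝ) k) f s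

lemma key_vec (N n : ℕ) (S : Matrix (Fin N) (Fin N) ℝ) (hsymm : S.IsHermitian)
    (hnull : ∀ v : Fin N → ℝ, S.mulVec v = 0 ↔ ∃ c : ℝ, v = fun _ => c)
    (W : Fin N → EuclideanSpace ℝ (Fin n)) (hW : ∑ i, W i = 0) :
    ∃ Y : Fin N → EuclideanSpace ℝ (Fin n),
      (∑ i, Y i = 0) ∧ ∀ i, ∑ j, S i j • Y j = W i := by
  rcases Nat.eq_zero_or_pos N with h0 | hN
  · subst h0
    exact ⟨0, by simp, fun i => i.elim0⟩
  have hk : ∀ k : Fin n, ∃ y : Fin N → ℝ, (∑ i, y i = 0) ∧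
      S.mulVec y = fun i => W i k := by
    intro k
    apply key_scalar' N hN S hsymm hnull
    have : (∑ i, W i) k = (0 : EuclideanSpace ℝ (Fin n)) k := by rw [hW]
    simpa [euc_sum_apply] using this
  choose y hy0 hy using hk
  refine ⟨fun i => WithLp.toLp 2 (fun k => y k i), ?_, ?_⟩
  · ext k
    simpa [euc_sum_apply] using hy0 k
  · intro i
    ext k
    have := congrFun (hy k) i
    simp only [Matrix.mulVec, dotProduct] at this
    rw [euc_sum_apply]
    simpa [PiLp.smul_apply, smul_eq_mul] using this



/-- Lemma 1 of the paper: Let `T₁,…,T_N` be maximal monotone on `ℝⁿ`,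
`S = √C` symmetric positive semidefinite with `null(S) = span{𝟏}`, and `α > 0`.
If `0 ∈ Σᵢ Tᵢ(z*)` then there exist `Y* ∈ range(S)` and `Z* = 𝟏 (z*)ᵀ` (i.e. all rows
equal to `z*`) with `0 ∈ αT(Z*) + S Y*` and `S Z* = 0`. Conversely, if a pair
`(Z*, Y*)` satisfies these relations then `Z*` is consensual, `Z* = 𝟏 (z*)ᵀ`, with
`0 ∈ Σᵢ Tᵢ(z*)`. Here `S` acts on `Fin N`-indexed families of vectors row-wise. -/
theorem stmt9 (N n : ℕ)
    (S : Matrix (Fin N) (Fin N) ℝ) (hSpsd : S.PosSemidef)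
    (hnull : ∀ v : Fin N → ℝ, S.mulVec v = 0 ↔ ∃ c : ℝ, v = fun _ => c)
    (α : ℝ) (hα : 0 < α)
    (Ti : Fin N → (EuclideanSpace ℝ (Fin n) → Set (EuclideanSpace ℝ (Fin n))))
    (hTi : ∀ i, MaxMonoOp (Ti i)) :
    (∀ zstar : EuclideanSpace ℝ (Fin n),
      (∃ v : Fin N → EuclideanSpace ℝ (Fin n),
        (∀ i, v i ∈ Ti i zstar) ∧ ∑ i, v i = 0) →
      ∃ Ystar : Fin N → EuclideanSpace ℝ (Fin n),
        (∃ Y : Fin N → EuclideanSpace ℝ (Fin n), ∀ i, Ystar i = ∑ j, S i j • Y j) ∧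
        (∃ V : Fin N → EuclideanSpace ℝ (Fin n),
          (∀ i, V i ∈ Ti i zstar) ∧
          (∀ i, α • V i + ∑ j, S i j • Ystar j = 0)) ∧
        (∀ i, (∑ j, S i j • zstar) = (0 : EuclideanSpace ℝ (Fin n))))
    ∧
    (∀ Zstar Ystar : Fin N → EuclideanSpace ℝ (Fin n),
      (∃ V : Fin N → EuclideanSpace ℝ (Fin n),
        (∀ i, V i ∈ Ti i (Zstar i)) ∧
        (∀ i, α • V i + ∑ j, S i j • Ystar j = 0)) →
      (∀ i, (∑ j, S i j • Zstar j) = (0 : EuclideanSpace ℝ (Fin n))) →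
      ∃ zstar : EuclideanSpace ℝ (Fin n),
        (∀ i, Zstar i = zstar) ∧
        (∃ v : Fin N → EuclideanSpace ℝ (Fin n),
          (∀ i, v i ∈ Ti i zstar) ∧ ∑ i, v i = 0)) := by
  have hsymm := hSpsd.isHermitian
  have hone : S.mulVec (fun _ => (1:ℝ)) = 0 := (hnull _).mpr ⟨1, rfl⟩
  have hrow : ∀ i, ∑ j, S i j = 0 := fun i => by
    have := congrFun hone i
    simpa [Matrix.mulVec, dotProduct] using this
  have hcol : ∀ j, ∑ i, S i j = 0 := fun j => by
    have h : ∀ i, S i j = S j i := fun i => by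
      have := hsymm.apply i j; simpa using this.symm
    simp_rw [h]; exact hrow j
  constructor
  · rintro zstar ⟨v, hv, hvsum⟩
    have hW : ∑ i, (-α) • v i = 0 := by
      rw [← Finset.smul_sum, hvsum, smul_zero]
    obtain ⟨Ystar, hY0, hYeq⟩ := key_vec N n S hsymm hnull _ hW
    obtain ⟨Y, -, hYr⟩ := key_vec N n S hsymm hnull Ystar hY0
    refine ⟨Ystar, ⟨Y, fun i => (hYr i).symm⟩, ⟨v, hv, fun i => ?_⟩, fun i => ?_⟩
    · rw [hYeq i]
      module
    · rw [← Finset.sum_smul, hrow i, zero_smul]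
  · rintro Zstar Ystar ⟨V, hV, heq⟩ hZ
    rcases Nat.eq_zero_or_pos N with h0 | hN
    · subst h0
      exact ⟨0, fun i => i.elim0, V, fun i => i.elim0, by simp⟩
    have hm : ∀ k : Fin n, ∃ c, (fun i => Zstar i k) = fun _ => c := by
      intro k
      apply (hnull _).mp
      funext i
      have : (∑ j, S i j • Zstar j) k = (0 : EuclideanSpace ℝ (Fin n)) k := by rw [hZ i]
      rw [euc_sum_apply] at this
      simpa [Matrix.mulVec, dotProduct] using this
    choose c hc using hm
    set i₀ : Fin N := ⟨0, hN⟩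
    have hcons : ∀ i, Zstar i = Zstar i₀ := fun i => PiLp.ext fun k => by
      rw [congrFun (hc k) i, congrFun (hc k) i₀]
    refine ⟨Zstar i₀, hcons, V, fun i => (hcons i) ▸ hV i, ?_⟩
    have hsum : ∑ i, (α • V i + ∑ j, S i j • Ystar j) = 0 := by
      simp [heq]
    have h2 : ∑ i : Fin N, ∑ j, S i j • Ystar j = 0 := by
      rw [Finset.sum_comm]
      have h3 : ∀ j, ∑ i, S i j • Ystar j = 0 := fun j => by
        rw [← Finset.sum_smul, hcol j, zero_smul]
      simp [h3]
    rw [Finset.sum_add_distrib, ← Finset.smul_sum, h2, add_zero] at hsum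
    rcases smul_eq_zero.mp hsum with h | h
    · exact absurd h hα.ne'
    · exact h
end

section
/- Let (a_k) be a sequence in a finite-dimensional normed space with exactly the following property: for every cluster point ξ of (a_k), the limit lim_k ‖a_k − ξ‖_{P²} exists (where P ≻ 0 is fixed). Then (a_k), if bounded, has at most one cluster point and hence converges. -/
open RealInnerProductSpace Filter

/-- Let `(a_k)` be a bounded sequence in a finite-dimensional inner product
space such that for every cluster point `ξ` of `(a_k)` the limit `lim_k ‖a_k − ξ‖_{P²}`
exists (`P ≻ 0` symmetric, `‖x‖_{P²} = ‖Px‖`). Then `(a_k)` has at most one cluster point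
and hence converges. -/
theorem stmt12 {E : Type*} [NormedAddCommGroup E] [InnerProductSpace ℝ E]
    [FiniteDimensional ℝ E]
    (P : E →ₗ[ℝ] E)
    (hPsym : ∀ x y, ⟪P x, y⟫ = ⟪x, P y⟫)
    (hPpos : ∀ x, x ≠ 0 → 0 < ⟪x, P x⟫)
    (a : ℕ → E)
    (hconv : ∀ ξ, MapClusterPt ξ atTop a →
      ∃ L, Tendsto (fun k => ‖P (a k - ξ)‖) atTop (nhds L))
    (hbdd : ∃ M, ∀ k, ‖a k‖ ≤ M) :
    (∀ ξ₁ ξ₂, MapClusterPt ξ₁ atTop a → MapClusterPt ξ₂ atTop a → ξ₁ = ξ₂) ∧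
    ∃ ξ, Tendsto a atTop (nhds ξ) := by
  have hPcont : Continuous P := P.continuous_of_finiteDimensional
  -- For every cluster point, the norm sequence tends to 0
  have hzero : ∀ ξ, MapClusterPt ξ atTop a →
      Tendsto (fun k => ‖P (a k - ξ)‖) atTop (nhds 0) := by
    intro ξ hξ
    obtain ⟨L, hL⟩ := hconv ξ hξ
    obtain ⟨ψ, hψmono, hψ⟩ := subseq_tendsto_of_neBot hξ
    have h1 : Tendsto (fun n => ‖P (a (ψ n) - ξ)‖) atTop (nhds 0) := by
      have : Tendsto (fun n => a (ψ n) - ξ) atTop (nhds 0) := by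
        simpa using hψ.sub_const ξ
      have := (hPcont.tendsto 0).comp this
      rw [map_zero] at this
      simpa using this.norm
    have h2 : Tendsto (fun n => ‖P (a (ψ n) - ξ)‖) atTop (nhds L) :=
      hL.comp (hψmono.tendsto_atTop)
    rwa [tendsto_nhds_unique h2 h1] at hL
  have huniq : ∀ ξ₁ ξ₂, MapClusterPt ξ₁ atTop a → MapClusterPt ξ₂ atTop a → ξ₁ = ξ₂ := by
    intro ξ₁ ξ₂ h₁ h₂
    have hz1 := hzero ξ₁ h₁
    have hz2 := hzero ξ₂ h₂
    have hsum : Tendsto (fun k => ‖P (a k - ξ₁)‖ + ‖P (a k - ξ₂)‖) atTop (nhds 0) := by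
      simpa using hz1.add hz2
    have hle : ∀ k, ‖P (ξ₁ - ξ₂)‖ ≤ ‖P (a k - ξ₁)‖ + ‖P (a k - ξ₂)‖ := by
      intro k
      have : P (ξ₁ - ξ₂) = P (a k - ξ₂) - P (a k - ξ₁) := by
        rw [← map_sub]; congr 1; abel
      rw [this]
      rw [add_comm]
      exact norm_sub_le _ _
    have hP0 : ‖P (ξ₁ - ξ₂)‖ ≤ 0 :=
      le_of_tendsto_of_tendsto tendsto_const_nhds hsum (Eventually.of_forall hle)
    have hP0' : P (ξ₁ - ξ₂) = 0 := by
      simpa using le_antisymm hP0 (norm_nonneg _)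
    by_contra hne
    have : ξ₁ - ξ₂ ≠ 0 := sub_ne_zero.mpr hne
    have := hPpos _ this
    rw [hP0'] at this
    simp at this
  refine ⟨huniq, ?_⟩
  obtain ⟨M, hM⟩ := hbdd
  have hmem : ∀ k, a k ∈ Metric.closedBall (0 : E) M := fun k => by
    simpa [Metric.mem_closedBall, dist_zero_right] using hM k
  obtain ⟨ξ, _, φ, hφmono, hφ⟩ :=
    tendsto_subseq_of_bounded Metric.isBounded_closedBall hmem
  have hξcl : MapClusterPt ξ atTop a :=
    MapClusterPt.of_comp hφmono.tendsto_atTop hφ.mapClusterPt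
  refine ⟨ξ, tendsto_of_subseq_tendsto fun ns hns => ?_⟩
  obtain ⟨ξ', _, ms, hmsmono, hms⟩ :=
    tendsto_subseq_of_bounded Metric.isBounded_closedBall (fun n => hmem (ns n))
  have hξ'cl : MapClusterPt ξ' atTop a :=
    MapClusterPt.of_comp (hns.comp hmsmono.tendsto_atTop) hms.mapClusterPt
  exact ⟨ms, by rw [huniq ξ' ξ hξ'cl hξcl] at hms; exact hms⟩
end

section
/- Let F : E → E be nonexpansive on a finite-dimensional normed space with a fixed point ξ*. Suppose a sequence (ξ^k) satisfies ‖ξ^{k+1} − F(ξ^k)‖ ≤ ε_k with Σ_k ε_k < ∞. Then lim_k ‖ξ^k − ξ*‖ exists and the sequence (ξ^k) is bounded, with ‖ξ^{l+1} − ξ*‖ ≤ ‖ξ^0 − ξ*‖ + Σ_{k=0}^∞ ε_k for all l. -/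
open Filter

/-- Let `F` be nonexpansive on a finite-dimensional normed space with fixed
point `ξ*`, and suppose `‖ξ^{k+1} − F(ξ^k)‖ ≤ ε_k` with `Σ ε_k < ∞`, `ε_k ≥ 0`. Then
`lim_k ‖ξ^k − ξ*‖` exists and `‖ξ^{l+1} − ξ*‖ ≤ ‖ξ^0 − ξ*‖ + Σ_{k} ε_k` for all `l`,
so the sequence is bounded. -/
theorem stmt13 {E : Type*} [NormedAddCommGroup E] [NormedSpace ℝ E]
    [FiniteDimensional ℝ E]
    (F : E → E) (hF : ∀ x y, ‖F x - F y‖ ≤ ‖x - y‖)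
    (ξstar : E) (hfix : F ξstar = ξstar)
    (ξ : ℕ → E) (ε : ℕ → ℝ) (hε : ∀ k, 0 ≤ ε k) (hsum : Summable ε)
    (hseq : ∀ k, ‖ξ (k + 1) - F (ξ k)‖ ≤ ε k) :
    (∃ L, Tendsto (fun k => ‖ξ k - ξstar‖) atTop (nhds L)) ∧
    (∀ l, ‖ξ (l + 1) - ξstar‖ ≤ ‖ξ 0 - ξstar‖ + ∑' k, ε k) := by

  set a : ℕ → ℝ := fun k => ‖ξ k - ξstar‖ with ha
  have h1 : ∀ k, a (k + 1) ≤ a k + ε k := by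
    intro k
    have : ξ (k + 1) - ξstar = (ξ (k + 1) - F (ξ k)) + (F (ξ k) - F ξstar) := by
      rw [hfix]; abel
    calc a (k + 1) = ‖(ξ (k + 1) - F (ξ k)) + (F (ξ k) - F ξstar)‖ := by rw [ha]; simp only []; rw [this]
      _ ≤ ‖ξ (k + 1) - F (ξ k)‖ + ‖F (ξ k) - F ξstar‖ := norm_add_le _ _
      _ ≤ ε k + ‖ξ k - ξstar‖ := add_le_add (hseq k) (hF _ _)
      _ = a k + ε k := by ring
  have hpart : ∀ k, ∑ i ∈ Finset.range k, ε i ≤ ∑' i, ε i := fun k =>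
    Summable.sum_le_tsum _ (fun i _ => hε i) hsum
  have h2 : ∀ l, a (l + 1) ≤ a 0 + ∑ i ∈ Finset.range (l + 1), ε i := by
    intro l
    induction l with
    | zero => simpa using h1 0
    | succ n ih =>
      calc a (n + 1 + 1) ≤ a (n + 1) + ε (n + 1) := h1 _
        _ ≤ a 0 + ∑ i ∈ Finset.range (n + 1), ε i + ε (n + 1) := by linarith
        _ = a 0 + ∑ i ∈ Finset.range (n + 2), ε i := by
            rw [show n + 2 = (n + 1) + 1 from rfl, Finset.sum_range_succ _ (n + 1)]; ring
  constructor
  · set b : ℕ → ℝ := fun k => a k - ∑ i ∈ Finset.range k, ε i with hb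
    have hanti : Antitone b := antitone_nat_of_succ_le (by
      intro k
      have := h1 k
      simp only [hb, Finset.sum_range_succ]
      linarith)
    have hbdd : BddBelow (Set.range b) := by
      refine ⟨-(∑' i, ε i), ?_⟩
      rintro x ⟨k, rfl⟩
      have := hpart k
      have h0 : 0 ≤ a k := norm_nonneg _
      simp only [hb]
      linarith
    have hbt : Tendsto b atTop (nhds (⨅ k, b k)) :=
      tendsto_atTop_ciInf hanti hbdd
    have hst : Tendsto (fun k => ∑ i ∈ Finset.range k, ε i) atTop (nhds (∑' i, ε i)) :=
      hsum.hasSum.tendsto_sum_nat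
    refine ⟨(⨅ k, b k) + ∑' i, ε i, ?_⟩
    have := hbt.add hst
    convert this using 2 with k
    simp [hb]
  · intro l
    have := h2 l
    have := hpart (l + 1)
    simp only [ha] at *
    linarith
end

section
/- Let Φ : E ⇉ E be maximal monotone on a finite-dimensional inner product space such that Φ⁻¹ is Lipschitz continuous at 0 with modulus a ≥ 0 (i.e., Φ⁻¹(0) = {ξ*} and ‖ξ − ξ*‖ ≤ a‖w‖ whenever ξ ∈ Φ⁻¹(w), ‖w‖ ≤ τ, for some τ > 0). Let P be the resolvent (I + Φ)⁻¹ and Ψ = I − P. Then for any ζ with ‖Ψ(ζ)‖ ≤ τ, one has ‖P(ζ) − ξ*‖ ≤ a‖Ψ(ζ)‖, and combined with ‖P(ζ) − ξ*‖² + ‖Ψ(ζ)‖² ≤ ‖ζ − ξ*‖², this gives ‖P(ζ) − ξ*‖ ≤ μ‖ζ − ξ*‖ where μ = a/√(a² + 1) < 1. -/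
open RealInnerProductSpace

/-- Let `Φ` be maximal monotone on a finite-dimensional inner product space
with `Φ⁻¹` Lipschitz continuous at `0` with modulus `a ≥ 0`: `Φ⁻¹(0) = {ξ*}` and
`‖ξ − ξ*‖ ≤ a‖w‖` whenever `w ∈ Φ(ξ)`, `‖w‖ ≤ τ`. Let `P = (I+Φ)⁻¹` and `Ψ = I − P`.
Then for any `ζ` with `‖Ψ(ζ)‖ ≤ τ`: `‖P(ζ) − ξ*‖ ≤ a‖Ψ(ζ)‖`, and
`‖P(ζ) − ξ*‖ ≤ μ‖ζ − ξ*‖` with `μ = a/√(a²+1) < 1`. -/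
theorem stmt16 {E : Type*} [NormedAddCommGroup E] [InnerProductSpace ℝ E]
    [FiniteDimensional ℝ E]
    (Φ : E → Set E) (hΦ : MaxMonoOp Φ)
    (a τ : ℝ) (ha : 0 ≤ a) (hτ : 0 < τ)
    (ξstar : E)
    (hinv : ∀ ξ, (0 : E) ∈ Φ ξ ↔ ξ = ξstar)
    (hlip : ∀ ξ w, w ∈ Φ ξ → ‖w‖ ≤ τ → ‖ξ - ξstar‖ ≤ a * ‖w‖)
    (P : E → E) (hP : ∀ ζ, ζ - P ζ ∈ Φ (P ζ)) :
    a / Real.sqrt (a ^ 2 + 1) < 1 ∧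
    ∀ ζ, ‖ζ - P ζ‖ ≤ τ →
      ‖P ζ - ξstar‖ ≤ a * ‖ζ - P ζ‖ ∧
      ‖P ζ - ξstar‖ ≤ (a / Real.sqrt (a ^ 2 + 1)) * ‖ζ - ξstar‖ := by
  have hs2 : Real.sqrt (a ^ 2 + 1) ^ 2 = a ^ 2 + 1 :=
    Real.sq_sqrt (by positivity)
  have hs0 : 0 < Real.sqrt (a ^ 2 + 1) := Real.sqrt_pos.mpr (by positivity)
  have hmu : a / Real.sqrt (a ^ 2 + 1) < 1 := by
    rw [div_lt_one hs0]
    nlinarith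
  refine ⟨hmu, fun ζ hζ => ?_⟩
  have h1 : ‖P ζ - ξstar‖ ≤ a * ‖ζ - P ζ‖ := hlip (P ζ) (ζ - P ζ) (hP ζ) hζ
  refine ⟨h1, ?_⟩
  have hz : (0 : E) ∈ Φ ξstar := (hinv ξstar).mpr rfl
  have hmono : 0 ≤ ⟪P ζ - ξstar, (ζ - P ζ) - 0⟫ :=
    hΦ.1 (P ζ) ξstar (ζ - P ζ) 0 (hP ζ) hz
  rw [sub_zero] at hmono
  -- ‖ζ - ξ*‖² = ‖Pζ - ξ*‖² + 2⟪Pζ-ξ*, ζ-Pζ⟫ + ‖ζ-Pζ‖²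
  have hexp : ‖ζ - ξstar‖ ^ 2 =
      ‖P ζ - ξstar‖ ^ 2 + 2 * ⟪P ζ - ξstar, ζ - P ζ⟫ + ‖ζ - P ζ‖ ^ 2 := by
    have := norm_add_sq_real (P ζ - ξstar) (ζ - P ζ)
    have heq : (P ζ - ξstar) + (ζ - P ζ) = ζ - ξstar := by abel
    rw [heq] at this
    linarith
  have hpyth : ‖P ζ - ξstar‖ ^ 2 + ‖ζ - P ζ‖ ^ 2 ≤ ‖ζ - ξstar‖ ^ 2 := by
    nlinarith
  set p := ‖P ζ - ξstar‖ with hp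
  set ψ := ‖ζ - P ζ‖ with hψ
  set q := ‖ζ - ξstar‖ with hq
  have hp0 : 0 ≤ p := norm_nonneg _
  have hψ0 : 0 ≤ ψ := norm_nonneg _
  have hq0 : 0 ≤ q := norm_nonneg _
  -- p² (a²+1) ≤ a² q²  hence  p √(a²+1) ≤ a q
  have key : p * Real.sqrt (a ^ 2 + 1) ≤ a * q := by
    nlinarith [sq_nonneg (p - a * ψ), sq_nonneg (a * ψ - p), mul_nonneg ha hq0,
      mul_nonneg hp0 hs0.le, hs2, sq_nonneg (p * Real.sqrt (a ^ 2 + 1) - a * q),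
      sq_nonneg (p * Real.sqrt (a ^ 2 + 1) + a * q)]
  rw [div_mul_eq_mul_div, le_div_iff₀ hs0]
  linarith [key]
end

section
/- Let S : ℝⁿ ⇉ ℝᵐ be a polyhedral multifunction (its graph is a finite union of convex polyhedra). If S(x₀) is a singleton, then S is Lipschitz continuous at x₀: there exist a ≥ 0 and a neighborhood U of x₀ such that S(x) ⊆ S(x₀) + a‖x − x₀‖ B for all x ∈ U, where B is the closed unit ball. -/
def IsPolyhedron {V : Type*} [AddCommGroup V] [Module ℝ V] (K : Set V) : Prop :=
  ∃ (k : ℕ) (f : Fin k → (V →ₗ[ℝ] ℝ)) (c : Fin k → ℝ),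
    K = {x | ∀ i, f i x ≤ c i}

lemma isPolyhedron_of_fintype {V : Type*} [AddCommGroup V] [Module ℝ V]
    {ι : Type*} [Fintype ι] (f : ι → V →ₗ[ℝ] ℝ) (c : ι → ℝ) :
    IsPolyhedron {x | ∀ i, f i x ≤ c i} := by
  obtain ⟨e⟩ : Nonempty (ι ≃ Fin (Fintype.card ι)) := ⟨Fintype.equivFin ι⟩
  refine ⟨Fintype.card ι, fun j => f (e.symm j), fun j => c (e.symm j), ?_⟩
  ext x
  constructor
  · intro h j; exact h _
  · intro h i; have := h (e i); simpa using this

lemma IsPolyhedron.isClosed {V : Type*} [NormedAddCommGroup V] [NormedSpace ℝ V]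
    [FiniteDimensional ℝ V] {K : Set V} (h : IsPolyhedron K) : IsClosed K := by
  obtain ⟨k, f, c, rfl⟩ := h
  rw [Set.setOf_forall]
  exact isClosed_iInter fun i =>
    IsClosed.preimage (f i).continuous_of_finiteDimensional isClosed_Iic

lemma IsPolyhedron.image_equiv {V W : Type*} [AddCommGroup V] [Module ℝ V]
    [AddCommGroup W] [Module ℝ W] {K : Set V} (h : IsPolyhedron K) (e : V ≃ₗ[ℝ] W) :
    IsPolyhedron (e '' K) := by
  obtain ⟨k, f, c, rfl⟩ := h
  refine ⟨k, fun i => (f i).comp (e.symm : W →ₗ[ℝ] V), c, ?_⟩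
  ext w
  constructor
  · rintro ⟨v, hv, rfl⟩ i; simpa using hv i
  · intro hw
    exact ⟨e.symm w, fun i => hw i, by simp⟩

open Classical in
/-- Fourier–Motzkin elimination of one real variable. -/
lemma fm_step {V : Type*} [AddCommGroup V] [Module ℝ V] {P : Set (V × ℝ)}
    (h : IsPolyhedron P) : IsPolyhedron (Prod.fst '' P) := by
  obtain ⟨k, f, c, rfl⟩ := h
  set g : Fin k → V →ₗ[ℝ] ℝ := fun i => (f i).comp (LinearMap.inl ℝ V ℝ) with hg
  set a : Fin k → ℝ := fun i => f i (0, 1) with ha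
  have hf : ∀ i (w : V) (t : ℝ), f i (w, t) = g i w + t * a i := by
    intro i w t
    have : (w, t) = (w, 0) + t • ((0 : V), (1 : ℝ)) := by
      simp [Prod.ext_iff]
    rw [this, map_add, map_smul]
    simp [hg, ha, smul_eq_mul]
  set h' : Fin k × Fin k → V →ₗ[ℝ] ℝ := fun p =>
    if 0 < a p.1 ∧ a p.2 < 0 then a p.1 • g p.2 - a p.2 • g p.1
    else if a p.1 = 0 ∧ p.1 = p.2 then g p.1 else 0 with hh'
  set d : Fin k × Fin k → ℝ := fun p =>
    if 0 < a p.1 ∧ a p.2 < 0 then a p.1 * c p.2 - a p.2 * c p.1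
    else if a p.1 = 0 ∧ p.1 = p.2 then c p.1 else 0 with hd
  have key : Prod.fst '' {x : V × ℝ | ∀ i, f i x ≤ c i} = {w | ∀ p, h' p w ≤ d p} := by
    ext w
    constructor
    · rintro ⟨⟨w', t⟩, hmem, rfl⟩
      intro p
      have h1 := hmem p.1
      have h2 := hmem p.2
      rw [hf] at h1 h2
      simp only [hh', hd]
      split_ifs with hb1 hb2
      · obtain ⟨hp1, hp2⟩ := hb1
        simp only [LinearMap.sub_apply, LinearMap.smul_apply, smul_eq_mul]
        nlinarith [mul_le_mul_of_nonneg_left h2 hp1.le,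
          mul_le_mul_of_nonpos_left h1 hp2.le]
      · obtain ⟨hz, hpe⟩ := hb2
        have := hmem p.1
        rw [hf, hz] at this
        simpa using this
      · simp
    · intro hw
      set up : Finset (Fin k) := Finset.univ.filter (fun i => 0 < a i) with hup
      set lo : Finset (Fin k) := Finset.univ.filter (fun i => a i < 0) with hlo
      set t : ℝ := if hu : up.Nonempty then up.inf' hu (fun i => (c i - g i w) / a i)
        else if hl : lo.Nonempty then lo.sup' hl (fun i => (c i - g i w) / a i)
        else 0 with hts
      refine ⟨(w, t), ?_, rfl⟩
      intro i
      rw [hf]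
      rcases lt_trichotomy (a i) 0 with hai | hai | hai
      · -- a i < 0 : need t ≥ (c i - g i w)/ a i  (i.e. t * a i ≤ c i - g i w)
        have hil : i ∈ lo := by simp [hlo, hai]
        by_cases hu : up.Nonempty
        · obtain ⟨i₀, hi₀, hti⟩ := Finset.exists_mem_eq_inf' hu (fun i => (c i - g i w) / a i)
          have hai₀ : 0 < a i₀ := by simpa [hup] using hi₀
          have hpair := hw (i₀, i)
          have e1 : h' (i₀, i) = a i₀ • g i - a i • g i₀ := if_pos ⟨hai₀, hai⟩
          have e2 : d (i₀, i) = a i₀ * c i - a i * c i₀ := if_pos ⟨hai₀, hai⟩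
          rw [e1, e2] at hpair
          simp only [LinearMap.sub_apply, LinearMap.smul_apply, smul_eq_mul] at hpair
          have ht' : t = (c i₀ - g i₀ w) / a i₀ := by rw [hts, dif_pos hu, hti]
          have hta : t * a i₀ = c i₀ - g i₀ w := by
            rw [ht']; field_simp
          have h4 : a i₀ * (t * a i) = (c i₀ - g i₀ w) * a i := by
            calc a i₀ * (t * a i) = (t * a i₀) * a i := by ring
              _ = (c i₀ - g i₀ w) * a i := by rw [hta]
          have key2 : a i₀ * (g i w + t * a i) ≤ a i₀ * c i := by
            rw [mul_add, h4]; nlinarith [hpair]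
          exact le_of_mul_le_mul_left key2 hai₀
        · have hl : lo.Nonempty := ⟨i, hil⟩
          have ht' : t = lo.sup' hl (fun i => (c i - g i w) / a i) := by
            rw [hts, dif_neg hu, dif_pos hl]
          have hle : (c i - g i w) / a i ≤ t := by
            rw [ht']; exact Finset.le_sup' (fun j => (c j - g j w) / a j) hil
          have : t * a i ≤ ((c i - g i w) / a i) * a i :=
            mul_le_mul_of_nonpos_right hle hai.le
          rw [div_mul_cancel₀ _ (ne_of_lt hai)] at this
          linarith
      · have hpair := hw (i, i)
        have h1 : ¬(0 < a i ∧ a i < 0) := by simp [hai]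
        have e1 : h' (i, i) = g i := (if_neg h1).trans (if_pos ⟨hai, rfl⟩)
        have e2 : d (i, i) = c i := (if_neg h1).trans (if_pos ⟨hai, rfl⟩)
        rw [e1, e2] at hpair
        rw [hai]
        simpa using hpair
      · have hiu : i ∈ up := by simp [hup, hai]
        have hu : up.Nonempty := ⟨i, hiu⟩
        have ht' : t = up.inf' hu (fun i => (c i - g i w) / a i) := by
          rw [hts, dif_pos hu]
        have hle : t ≤ (c i - g i w) / a i := by
          rw [ht']; exact Finset.inf'_le _ hiu
        have : t * a i ≤ ((c i - g i w) / a i) * a i :=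
          mul_le_mul_of_nonneg_right hle hai.le
        rw [div_mul_cancel₀ _ (ne_of_gt hai)] at this
        linarith
  rw [key]
  exact isPolyhedron_of_fintype h' d

/-- split off the last coordinate -/
noncomputable def finSnocLinearEquiv (k : ℕ) : (Fin (k + 1) → ℝ) ≃ₗ[ℝ] (Fin k → ℝ) × ℝ where
  toFun x := (fun i => x i.castSucc, x (Fin.last k))
  invFun p := Fin.snoc p.1 p.2
  map_add' x y := rfl
  map_smul' c x := rfl
  left_inv x := Fin.snoc_init_self x
  right_inv p := by
    ext i
    · simp [Fin.snoc_castSucc]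
    · simp [Fin.snoc_last]

noncomputable def prodFin0Equiv (V : Type*) [AddCommGroup V] [Module ℝ V] :
    (V × (Fin 0 → ℝ)) ≃ₗ[ℝ] V where
  toFun z := z.1
  invFun v := (v, fun i => i.elim0)
  map_add' _ _ := rfl
  map_smul' _ _ := rfl
  left_inv z := by
    refine Prod.ext rfl ?_
    exact Subsingleton.elim _ _
  right_inv v := rfl

noncomputable def splitEquiv (V : Type*) [AddCommGroup V] [Module ℝ V] (k : ℕ) :
    (V × (Fin (k + 1) → ℝ)) ≃ₗ[ℝ] (V × (Fin k → ℝ)) × ℝ :=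
  ((LinearEquiv.refl ℝ V).prodCongr (finSnocLinearEquiv k)).trans
    (LinearEquiv.prodAssoc ℝ V (Fin k → ℝ) ℝ).symm

lemma fm_pi {V : Type*} [AddCommGroup V] [Module ℝ V] :
    ∀ (k : ℕ) (P : Set (V × (Fin k → ℝ))), IsPolyhedron P → IsPolyhedron (Prod.fst '' P) := by
  intro k
  induction k with
  | zero =>
    intro P hP
    have : Prod.fst '' P = (prodFin0Equiv V) '' P := rfl
    rw [this]
    exact hP.image_equiv (prodFin0Equiv V)
  | succ k ih =>
    intro P hP
    have himg : Prod.fst '' P = Prod.fst '' (Prod.fst '' ((splitEquiv V k) '' P)) := by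
      ext v; simp only [Set.mem_image, exists_exists_and_eq_and]
      constructor
      · rintro ⟨z, hz, rfl⟩; exact ⟨z, hz, rfl⟩
      · rintro ⟨z, hz, rfl⟩; exact ⟨z, hz, rfl⟩
    rw [himg]
    exact ih _ (fm_step (hP.image_equiv _))

noncomputable def euclProdEquiv (V : Type*) [AddCommGroup V] [Module ℝ V] (m : ℕ) :
    (V × EuclideanSpace ℝ (Fin m)) ≃ₗ[ℝ] V × (Fin m → ℝ) :=
  (LinearEquiv.refl ℝ V).prodCongr (WithLp.linearEquiv 2 ℝ (Fin m → ℝ))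

lemma poly_proj {V : Type*} [AddCommGroup V] [Module ℝ V] {m : ℕ}
    {P : Set (V × EuclideanSpace ℝ (Fin m))} (hP : IsPolyhedron P) :
    IsPolyhedron (Prod.fst '' P) := by
  have himg : Prod.fst '' P = Prod.fst '' ((euclProdEquiv V m) '' P) := by
    ext v; simp only [Set.mem_image, exists_exists_and_eq_and]
    constructor
    · rintro ⟨z, hz, rfl⟩; exact ⟨z, hz, rfl⟩
    · rintro ⟨z, hz, rfl⟩; exact ⟨z, hz, rfl⟩
  rw [himg]
  exact fm_pi m _ (hP.image_equiv _)

lemma cone_bound {E F : Type*} [NormedAddCommGroup E] [NormedSpace ℝ E]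
    [NormedAddCommGroup F] [NormedSpace ℝ F] [FiniteDimensional ℝ E] [FiniteDimensional ℝ F]
    {C : Set (E × F)} (hclosed : IsClosed C)
    (hcone : ∀ z ∈ C, ∀ t : ℝ, 0 ≤ t → t • z ∈ C)
    (hfib : ∀ v : F, ((0 : E), v) ∈ C → v = 0) :
    ∃ L : ℝ, 0 ≤ L ∧ ∀ z ∈ C, ‖z.2‖ ≤ L * ‖z.1‖ := by
  set K := C ∩ (Metric.closedBall (0 : E) 1 ×ˢ Metric.sphere (0 : F) 1) with hK
  have hKcompact : IsCompact K :=
    IsCompact.inter_left ((isCompact_closedBall _ _).prod (isCompact_sphere _ _)) hclosed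
  -- a helper: for z in C with z.2 ≠ 0, the normalized point
  have hnorm : ∀ z ∈ C, z.2 ≠ 0 → (‖z.2‖⁻¹ • z) ∈ C ∧ ‖(‖z.2‖⁻¹ • z).2‖ = 1 ∧
      ‖(‖z.2‖⁻¹ • z).1‖ = ‖z.2‖⁻¹ * ‖z.1‖ := by
    intro z hz hz2
    have h2 : (0:ℝ) < ‖z.2‖ := norm_pos_iff.2 hz2
    refine ⟨hcone z hz _ (inv_nonneg.2 h2.le), ?_, ?_⟩
    · show ‖‖z.2‖⁻¹ • z.2‖ = 1
      rw [norm_smul, norm_inv, norm_norm]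
      field_simp
    · show ‖‖z.2‖⁻¹ • z.1‖ = ‖z.2‖⁻¹ * ‖z.1‖
      rw [norm_smul, norm_inv, norm_norm]
  rcases Set.eq_empty_or_nonempty K with hKe | hKne
  · refine ⟨1, zero_le_one, ?_⟩
    intro z hz
    rcases eq_or_ne z.2 0 with h0 | h0
    · simp [h0, norm_nonneg]
    obtain ⟨hzC, hz2, hz1⟩ := hnorm z hz h0
    have h2 : (0:ℝ) < ‖z.2‖ := norm_pos_iff.2 h0
    have hnotK : (‖z.2‖⁻¹ • z) ∉ K := by rw [hKe]; exact Set.notMem_empty _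
    have : ¬(‖(‖z.2‖⁻¹ • z).1‖ ≤ 1) := by
      intro hle
      exact hnotK ⟨hzC, by simpa [mem_closedBall_zero_iff] using hle,
        by simpa [mem_sphere_zero_iff_norm] using hz2⟩
    push_neg at this
    rw [hz1] at this
    have : 1 * ‖z.2‖ < ‖z.2‖⁻¹ * ‖z.1‖ * ‖z.2‖ := by
      exact (mul_lt_mul_iff_left₀ h2).2 (by linarith)
    rw [one_mul] at this
    have he : ‖z.2‖⁻¹ * ‖z.1‖ * ‖z.2‖ = ‖z.1‖ := by field_simp
    rw [he] at this
    linarith [this]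
  · obtain ⟨z₁, hz₁K, hmin⟩ := hKcompact.exists_isMinOn hKne
      ((continuous_norm.comp continuous_fst).continuousOn)
    set dmin := ‖z₁.1‖ with hdmin
    have hd1 : dmin ≤ 1 := by
      have := hz₁K.2.1
      simpa [mem_closedBall_zero_iff] using this
    have hdpos : 0 < dmin := by
      rcases lt_or_eq_of_le (norm_nonneg z₁.1) with h | h
      · exact h
      · exfalso
        have h10 : z₁.1 = 0 := norm_eq_zero.1 h.symm
        have hz₁C : z₁ ∈ C := hz₁K.1
        have : ((0 : E), z₁.2) ∈ C := by
          rw [← h10]; exact hz₁C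
        have h20 := hfib _ this
        have : ‖z₁.2‖ = 1 := by simpa [mem_sphere_zero_iff_norm] using hz₁K.2.2
        rw [h20] at this
        simp at this
    refine ⟨dmin⁻¹, (inv_nonneg.2 hdpos.le), ?_⟩
    intro z hz
    rcases eq_or_ne z.2 0 with h0 | h0
    · simp [h0]
      positivity
    obtain ⟨hzC, hz2, hz1⟩ := hnorm z hz h0
    have h2 : (0:ℝ) < ‖z.2‖ := norm_pos_iff.2 h0
    by_cases hle : ‖(‖z.2‖⁻¹ • z).1‖ ≤ 1
    · have hmem : (‖z.2‖⁻¹ • z) ∈ K :=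
        ⟨hzC, by simpa [mem_closedBall_zero_iff] using hle,
          by simpa [mem_sphere_zero_iff_norm] using hz2⟩
      have hmle : dmin ≤ ‖(‖z.2‖⁻¹ • z).1‖ := hmin hmem
      rw [hz1] at hmle
      -- dmin ≤ ‖z.2‖⁻¹ * ‖z.1‖
      have h3 : dmin * ‖z.2‖ ≤ ‖z.1‖ := by
        have := mul_le_mul_of_nonneg_right hmle h2.le
        calc dmin * ‖z.2‖ ≤ ‖z.2‖⁻¹ * ‖z.1‖ * ‖z.2‖ := this
          _ = ‖z.1‖ := by field_simp
      calc ‖z.2‖ = dmin⁻¹ * (dmin * ‖z.2‖) := by field_simp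
        _ ≤ dmin⁻¹ * ‖z.1‖ := by
            exact mul_le_mul_of_nonneg_left h3 (inv_nonneg.2 hdpos.le)
    · push_neg at hle
      rw [hz1] at hle
      have h4 : ‖z.2‖ < ‖z.1‖ := by
        have : 1 * ‖z.2‖ < ‖z.2‖⁻¹ * ‖z.1‖ * ‖z.2‖ := (mul_lt_mul_iff_left₀ h2).2 (by linarith)
        rw [one_mul] at this
        have he : ‖z.2‖⁻¹ * ‖z.1‖ * ‖z.2‖ = ‖z.1‖ := by field_simp
        linarith [he ▸ this]
      have h5 : ‖z.1‖ ≤ dmin⁻¹ * ‖z.1‖ := by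
        nlinarith [one_le_inv_iff₀.2 ⟨hdpos, hd1⟩, norm_nonneg z.1]
      linarith

open Classical in
lemma caseA {E F : Type*} [NormedAddCommGroup E] [NormedSpace ℝ E] [FiniteDimensional ℝ E]
    [NormedAddCommGroup F] [NormedSpace ℝ F] [FiniteDimensional ℝ F]
    {P : Set (E × F)} (hP : IsPolyhedron P) {x₀ : E} {y₀ : F}
    (h0 : (x₀, y₀) ∈ P) (huniq : ∀ y : F, (x₀, y) ∈ P → y = y₀) :
    ∃ L : ℝ, 0 ≤ L ∧ ∀ z ∈ P, ‖z.2 - y₀‖ ≤ L * ‖z.1 - x₀‖ := by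
  obtain ⟨k, f, c, rfl⟩ := hP
  set z₀ : E × F := (x₀, y₀) with hz₀
  set g : Fin k → (E × F) →ₗ[ℝ] ℝ := fun i => if f i z₀ = c i then f i else 0 with hg
  set C : Set (E × F) := {d | ∀ i, g i d ≤ (0 : ℝ)} with hC
  have hCpoly : IsPolyhedron C := ⟨k, g, 0, rfl⟩
  have hCclosed : IsClosed C := hCpoly.isClosed
  have hCcone : ∀ z ∈ C, ∀ t : ℝ, 0 ≤ t → t • z ∈ C := by
    intro z hz t ht i
    have := hz i
    rw [map_smul]
    simpa using mul_nonpos_of_nonneg_of_nonpos ht (by simpa using this)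
  have hfib : ∀ v : F, ((0 : E), v) ∈ C → v = 0 := by
    intro v hv
    have hev : ∀ᶠ t in nhdsWithin (0:ℝ) (Set.Ioi 0), ∀ i, f i (z₀ + t • ((0 : E), v)) ≤ c i := by
      rw [Filter.eventually_all]
      intro i
      by_cases hi : f i z₀ = c i
      · filter_upwards [self_mem_nhdsWithin] with t ht
        have hgi : g i ((0 : E), v) ≤ 0 := hv i
        rw [hg] at hgi
        simp only [if_pos hi] at hgi
        rw [map_add, map_smul, hi]
        have : t * f i ((0 : E), v) ≤ 0 :=
          mul_nonpos_of_nonneg_of_nonpos (le_of_lt ht) hgi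
        simpa [smul_eq_mul] using this
      · have hlt : f i z₀ < c i := lt_of_le_of_ne (h0 i) hi
        have hcont : Continuous fun t : ℝ => f i (z₀ + t • ((0 : E), v)) := by
          exact (f i).continuous_of_finiteDimensional.comp
            (continuous_const.add (continuous_id.smul continuous_const))
        have htend : Filter.Tendsto (fun t : ℝ => f i (z₀ + t • ((0 : E), v)))
            (nhdsWithin 0 (Set.Ioi 0)) (nhds (f i z₀)) := by
          have h00 : f i (z₀ + (0:ℝ) • ((0 : E), v)) = f i z₀ := by simp
          have := hcont.continuousAt (x := (0:ℝ))
          rw [ContinuousAt, h00] at this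
          exact this.mono_left nhdsWithin_le_nhds
        filter_upwards [htend.eventually_lt_const hlt] with t ht using ht.le
    obtain ⟨t, ht, htpos⟩ := (hev.and self_mem_nhdsWithin).exists
    have hmem : z₀ + t • ((0 : E), v) ∈ {x : E × F | ∀ i, f i x ≤ c i} := ht
    have hcoord : z₀ + t • ((0 : E), v) = (x₀, y₀ + t • v) := by
      rw [hz₀]; simp [Prod.ext_iff]
    rw [hcoord] at hmem
    have hyy : y₀ + t • v = y₀ := huniq _ hmem
    have htv : t • v = 0 := by
      have := congrArg (fun w => w - y₀) hyy
      simpa using this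
    rcases smul_eq_zero.1 htv with h | h
    · exact absurd h (ne_of_gt htpos)
    · exact h
  obtain ⟨L, hL0, hL⟩ := cone_bound hCclosed hCcone hfib
  refine ⟨L, hL0, ?_⟩
  intro z hz
  have hzC : z - z₀ ∈ C := by
    intro i
    rw [hg]
    by_cases hi : f i z₀ = c i
    · simp only [if_pos hi]
      rw [map_sub, hi]
      have := hz i
      linarith
    · simp [if_neg hi]
  have := hL (z - z₀) hzC
  simpa using this


/-- Robinson: Let `S : ℝⁿ ⇉ ℝᵐ` be a polyhedral multifunction (its graph
is a finite union of convex polyhedra). If `S(x₀)` is a singleton, then `S` is Lipschitz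
continuous at `x₀`: there exist `a ≥ 0` and a neighborhood `U` of `x₀` such that
`S(x) ⊆ S(x₀) + a‖x − x₀‖B` for all `x ∈ U`. -/
theorem stmt17 (n m : ℕ)
    (S : EuclideanSpace ℝ (Fin n) → Set (EuclideanSpace ℝ (Fin m)))
    (hpoly : ∃ (k : ℕ)
      (P : Fin k → Set (EuclideanSpace ℝ (Fin n) × EuclideanSpace ℝ (Fin m))),
      (∀ i, IsPolyhedron (P i)) ∧
      {p : EuclideanSpace ℝ (Fin n) × EuclideanSpace ℝ (Fin m) | p.2 ∈ S p.1} = ⋃ i, P i)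
    (x₀ : EuclideanSpace ℝ (Fin n)) (y₀ : EuclideanSpace ℝ (Fin m))
    (hsingle : S x₀ = {y₀}) :
    ∃ a : ℝ, 0 ≤ a ∧ ∃ U ∈ nhds x₀, ∀ x ∈ U, ∀ y ∈ S x,
      ∃ y' ∈ S x₀, ‖y - y'‖ ≤ a * ‖x - x₀‖ := by
  obtain ⟨k, P, hPpoly, hgraph⟩ := hpoly
  have hy₀ : y₀ ∈ S x₀ := by rw [hsingle]; exact rfl
  have hmem : ∀ x y, y ∈ S x ↔ ∃ i, (x, y) ∈ P i := by
    intro x y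
    have : (x, y) ∈ {p : EuclideanSpace ℝ (Fin n) × EuclideanSpace ℝ (Fin m) | p.2 ∈ S p.1}
        ↔ (x, y) ∈ ⋃ i, P i := by rw [hgraph]
    simpa [Set.mem_iUnion] using this
  have key : ∀ i, ∃ L : ℝ, 0 ≤ L ∧ ∃ V ∈ nhds x₀, ∀ x ∈ V, ∀ y,
      (x, y) ∈ P i → ‖y - y₀‖ ≤ L * ‖x - x₀‖ := by
    intro i
    by_cases hc : ∃ y, (x₀, y) ∈ P i
    · obtain ⟨y', hy'⟩ := hc
      have hy'S : y' ∈ S x₀ := (hmem _ _).2 ⟨i, hy'⟩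
      rw [hsingle] at hy'S
      have hy'e : y' = y₀ := hy'S
      subst hy'e
      have huniq : ∀ y, (x₀, y) ∈ P i → y = y' := by
        intro y hy
        have : y ∈ S x₀ := (hmem _ _).2 ⟨i, hy⟩
        rw [hsingle] at this
        exact this
      obtain ⟨L, hL0, hL⟩ := caseA (hPpoly i) hy' huniq
      exact ⟨L, hL0, Set.univ, Filter.univ_mem, fun x _ y hy => hL (x, y) hy⟩
    · push_neg at hc
      have hD : IsClosed (Prod.fst '' P i) := (poly_proj (hPpoly i)).isClosed
      have hx₀ : x₀ ∉ Prod.fst '' P i := by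
        rintro ⟨⟨x, y⟩, hxy, rfl⟩
        exact hc y hxy
      refine ⟨0, le_refl 0, (Prod.fst '' P i)ᶜ, hD.isOpen_compl.mem_nhds hx₀, ?_⟩
      intro x hx y hy
      exact absurd ⟨(x, y), hy, rfl⟩ hx
  choose L hL0 V hV hprop using key
  refine ⟨∑ i, L i, Finset.sum_nonneg (fun i _ => hL0 i), ⋂ i, V i,
    Filter.iInter_mem.2 hV, ?_⟩
  intro x hx y hy
  obtain ⟨i, hi⟩ := (hmem x y).1 hy
  refine ⟨y₀, hy₀, ?_⟩
  calc ‖y - y₀‖ ≤ L i * ‖x - x₀‖ :=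
        hprop i x (Set.mem_iInter.1 hx i) y hi
    _ ≤ (∑ j, L j) * ‖x - x₀‖ := by
        apply mul_le_mul_of_nonneg_right _ (norm_nonneg _)
        exact Finset.single_le_sum (fun j _ => hL0 j) (Finset.mem_univ i)
end
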